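/- For any interval of natural numbers I = [I1..I2] ⊆ ℕ (with I1 ≥ 1), I can be partitioned into two finite sequences of pairwise disjoint and consecutive intervals {J^(−a), J^(−a+1), ..., J^(0)} and {J^(1), ..., J^(b)} such that every J^(i) belongs to the geometric covering 𝒥 and J^(i) ⊆ I, the lengths satisfy |J^(−i)|/|J^(−i+1)| ≤ 1/2 for i = 1,...,a, and |J^(i+1)|/|J^(i)| ≤ 1/2 for i = 1,...,b−1; i.e., the interval lengths successively (at least) double and then successively (at least) halve. -/

import Mathlib

/-- An interval `[s..e]` of natural numbers belongs to the geometric covering `𝒥`: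
it has the form `[m·2^k .. (m+1)·2^k − 1]` for some `k ≥ 0` and `m ≥ 1`. -/
def IsGCInterval (s e : ℕ) : Prop :=
  ∃ k m : ℕ, 1 ≤ m ∧ s = m * 2 ^ k ∧ e + 1 = (m + 1) * 2 ^ k

/-- Lemma 5 of Daniely et al.: any interval `[I1..I2]` with `I1 ≥ 1` can be partitioned into
consecutive geometric covering intervals `J^(−a), ..., J^(0), J^(1), ..., J^(b)` contained in
`[I1..I2]`, whose lengths at least double along the first sequence and at least halve along
the second. Here `J^(i) = [L i .. R i]`. -/
lemma gc_chunk {s k : ℕ} (hs : 1 ≤ s) (hdvd : 2 ^ k ∣ s) :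
    IsGCInterval s (s + 2 ^ k - 1) := by
  obtain ⟨m, hm⟩ := hdvd
  have h2k : 1 ≤ 2 ^ k := Nat.one_le_two_pow
  have hm1 : 1 ≤ m := by
    rcases Nat.eq_zero_or_pos m with h | h
    · subst h; omega
    · exact h
  refine ⟨k, m, hm1, by rw [hm]; ring, ?_⟩
  have h1 : s + 2 ^ k - 1 + 1 = s + 2 ^ k := by omega
  rw [h1, hm]; ring

lemma lemD : ∀ n : ℕ, ∀ s e c : ℕ, e - s = n → 1 ≤ s → s ≤ e → 2 ^ c ∣ s →
    e + 1 - s < 2 ^ (c + 1) →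
    ∃ (b : ℕ) (L R : ℤ → ℕ),
      L 0 = s ∧ R (b : ℤ) = e ∧
      (∀ i : ℤ, 0 ≤ i → i ≤ (b : ℤ) →
        L i ≤ R i ∧ IsGCInterval (L i) (R i) ∧ s ≤ L i ∧ R i ≤ e) ∧
      (∀ i : ℤ, 0 ≤ i → i < (b : ℤ) → L (i + 1) = R i + 1) ∧
      (∀ i : ℤ, 0 ≤ i → i < (b : ℤ) → 2 * (R (i + 1) - L (i + 1) + 1) ≤ R i - L i + 1) ∧
      R 0 + 1 - L 0 = 2 ^ Nat.log 2 (e + 1 - s) := by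
  intro n
  induction n using Nat.strong_induction_on with
  | _ n IH =>
  intro s e c hn hs hse hdvd hlen
  set k := Nat.log 2 (e + 1 - s) with hk
  have hlen1 : 1 ≤ e + 1 - s := by omega
  have h2k : 1 ≤ 2 ^ k := Nat.one_le_two_pow
  have hpow_le : 2 ^ k ≤ e + 1 - s := Nat.pow_log_le_self 2 (by omega)
  have hlt : e + 1 - s < 2 ^ (k + 1) := Nat.lt_pow_succ_log_self (by norm_num) _
  have hks : 2 ^ (k + 1) = 2 * 2 ^ k := by ring
  have hkc : k ≤ c := by
    by_contra h
    push_neg at h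
    have h2 := Nat.pow_le_pow_right (show 0 < 2 by norm_num) (show c + 1 ≤ k by omega)
    omega
  have hdvdk : 2 ^ k ∣ s := dvd_trans (pow_dvd_pow 2 hkc) hdvd
  by_cases hcov : e + 1 - s = 2 ^ k
  · refine ⟨0, fun _ => s, fun _ => e, rfl, rfl, ?_, ?_, ?_, by show e + 1 - s = 2 ^ k; omega⟩
    · intro i _ _
      refine ⟨hse, ?_, le_refl _, le_refl _⟩
      have hgc := gc_chunk hs hdvdk
      have he : e = s + 2 ^ k - 1 := by omega
      rwa [he]
    · intro i h1 h2; exfalso; omega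
    · intro i h1 h2; exfalso; omega
  · have hrem : 1 ≤ e + 1 - (s + 2 ^ k) := by omega
    have hs'le : s + 2 ^ k ≤ e := by omega
    have hk1 : 1 ≤ k := by
      by_contra h
      have hk0 : k = 0 := by omega
      rw [hk0] at hlt
      simp at hlt
      omega
    have hrem_lt : e + 1 - (s + 2 ^ k) < 2 ^ k := by omega
    have hdvd' : 2 ^ (k - 1) ∣ s + 2 ^ k := by
      have h1 : 2 ^ (k - 1) ∣ 2 ^ k := pow_dvd_pow 2 (by omega)
      exact dvd_add (dvd_trans h1 hdvdk) h1
    have hkm : 2 ^ (k - 1 + 1) = 2 ^ k := by congr 1; omega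
    obtain ⟨b', L', R', hL0, hRb, hmem, hcons, hhalf, hhead⟩ :=
      IH (e - (s + 2 ^ k)) (by omega) (s + 2 ^ k) e (k - 1) rfl (by omega) hs'le hdvd'
        (by omega)
    have hheadle : R' 0 + 1 - L' 0 ≤ 2 ^ (k - 1) := by
      rw [hhead]
      apply Nat.pow_le_pow_right (by norm_num)
      by_contra h
      push_neg at h
      have h2 := Nat.pow_le_pow_right (show 0 < 2 by norm_num)
        (show k ≤ Nat.log 2 (e + 1 - (s + 2 ^ k)) by omega)
      have h3 := Nat.pow_log_le_self 2 (show e + 1 - (s + 2 ^ k) ≠ 0 by omega)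
      omega
    have hkm2 : 2 * 2 ^ (k - 1) = 2 ^ k := by rw [← hkm]; ring
    refine ⟨b' + 1, fun i => if i ≤ 0 then s else L' (i - 1),
      fun i => if i ≤ 0 then s + 2 ^ k - 1 else R' (i - 1), by norm_num, ?_, ?_, ?_, ?_, ?_⟩
    · have hb : ¬ ((b' : ℤ) + 1 ≤ 0) := by omega
      push_cast
      rw [if_neg hb]
      have : (b' : ℤ) + 1 - 1 = (b' : ℤ) := by ring
      rw [this, hRb]
    · intro i h0 hb
      push_cast at hb
      simp only []
      by_cases hi : i ≤ 0
      · have : i = 0 := le_antisymm hi h0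
        subst this
        simp only [if_pos (le_refl (0:ℤ))]
        refine ⟨by omega, ?_, le_refl _, by omega⟩
        exact gc_chunk hs hdvdk
      · rw [if_neg hi, if_neg hi]
        obtain ⟨m1, m2, m3, m4⟩ := hmem (i - 1) (by omega) (by omega)
        exact ⟨m1, m2, by omega, m4⟩
    · intro i h0 hb
      push_cast at hb
      simp only []
      by_cases hi : i ≤ 0
      · have : i = 0 := le_antisymm hi h0
        subst this
        rw [if_neg (by omega : ¬ (0:ℤ) + 1 ≤ 0), if_pos (le_refl (0:ℤ))]
        have harg : (0:ℤ) + 1 - 1 = 0 := by ring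
        rw [harg, hL0]
        omega
      · rw [if_neg (by omega : ¬ i + 1 ≤ 0), if_neg hi]
        have harg : i + 1 - 1 = (i - 1) + 1 := by ring
        rw [harg]
        exact hcons (i - 1) (by omega) (by omega)
    · intro i h0 hb
      push_cast at hb
      simp only []
      by_cases hi : i ≤ 0
      · have : i = 0 := le_antisymm hi h0
        subst this
        rw [if_neg (by omega : ¬ (0:ℤ) + 1 ≤ 0), if_pos (le_refl (0:ℤ)),
          if_neg (by omega : ¬ (0:ℤ) + 1 ≤ 0), if_pos (le_refl (0:ℤ))]
        have harg : (0:ℤ) + 1 - 1 = 0 := by ring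
        rw [harg]
        obtain ⟨m1, _, _, _⟩ := hmem 0 (le_refl _) (by omega)
        omega
      · rw [if_neg (by omega : ¬ i + 1 ≤ 0), if_neg hi,
          if_neg (by omega : ¬ i + 1 ≤ 0), if_neg hi]
        have harg : i + 1 - 1 = (i - 1) + 1 := by ring
        rw [harg]
        exact hhalf (i - 1) (by omega) (by omega)
    · simp only [if_pos (le_refl (0:ℤ))]
      omega
lemma le_padic {k s : ℕ} (hs : s ≠ 0) (h : 2 ^ k ∣ s) : k ≤ padicValNat 2 s := by
  rw [← Nat.factorization_def s Nat.prime_two]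
  exact (Nat.Prime.pow_dvd_iff_le_factorization Nat.prime_two hs).mp h

lemma dvd_succ_pow {s : ℕ} (hs : s ≠ 0) :
    2 ^ (padicValNat 2 s + 1) ∣ s + 2 ^ padicValNat 2 s := by
  set v := padicValNat 2 s with hv
  obtain ⟨m, hm⟩ := pow_padicValNat_dvd (p := 2) (n := s)
  rw [← hv] at hm
  have hodd : ¬ 2 ∣ m := by
    have h2 := Nat.not_dvd_ordCompl Nat.prime_two hs
    rw [Nat.factorization_def s Nat.prime_two, ← hv] at h2
    have hm' : m = s / 2 ^ v := by
      rw [hm, Nat.mul_div_cancel_left _ (by positivity)]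
    rwa [hm']
  obtain ⟨t, ht⟩ : 2 ∣ m + 1 := by omega
  refine ⟨t, ?_⟩
  rw [hm]
  have h1 : 2 ^ v * m + 2 ^ v = 2 ^ v * (m + 1) := by ring
  rw [h1, ht]; ring

lemma lemU : ∀ n : ℕ, ∀ s e : ℕ, e - s = n → 1 ≤ s → s ≤ e →
    ∃ (a b : ℕ) (L R : ℤ → ℕ),
      L (-(a : ℤ)) = s ∧ R (b : ℤ) = e ∧
      (∀ i : ℤ, -(a : ℤ) ≤ i → i ≤ (b : ℤ) →
        L i ≤ R i ∧ IsGCInterval (L i) (R i) ∧ s ≤ L i ∧ R i ≤ e) ∧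
      (∀ i : ℤ, -(a : ℤ) ≤ i → i < (b : ℤ) → L (i + 1) = R i + 1) ∧
      (∀ i : ℤ, -(a : ℤ) < i → i ≤ 0 →
        2 * (R (i - 1) - L (i - 1) + 1) ≤ R i - L i + 1) ∧
      (∀ i : ℤ, 1 ≤ i → i < (b : ℤ) →
        2 * (R (i + 1) - L (i + 1) + 1) ≤ R i - L i + 1) ∧
      R (-(a : ℤ)) + 1 - L (-(a : ℤ)) =
        2 ^ min (padicValNat 2 s) (Nat.log 2 (e + 1 - s)) := by
  intro n
  induction n using Nat.strong_induction_on with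
  | _ n IH =>
  intro s e hn hs hse
  set v := padicValNat 2 s with hv
  set kl := Nat.log 2 (e + 1 - s) with hkl
  set k := min v kl with hkdef
  have hchoice : min v kl = v ∨ min v kl = kl := min_choice v kl
  have hlen1 : 1 ≤ e + 1 - s := by omega
  have h2k : 1 ≤ 2 ^ k := Nat.one_le_two_pow
  have hpow_le : 2 ^ k ≤ e + 1 - s :=
    le_trans (Nat.pow_le_pow_right (by norm_num) (min_le_right v kl))
      (Nat.pow_log_le_self 2 (by omega))
  have hdvdk : 2 ^ k ∣ s :=
    dvd_trans (pow_dvd_pow 2 (min_le_left v kl)) pow_padicValNat_dvd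
  by_cases hcov : e + 1 - s = 2 ^ k
  · refine ⟨0, 0, fun _ => s, fun _ => e, rfl, rfl, ?_, ?_, ?_, ?_,
      by show e + 1 - s = 2 ^ k; omega⟩
    · intro i _ _
      refine ⟨hse, ?_, le_refl _, le_refl _⟩
      have hgc := gc_chunk hs hdvdk
      have he : e = s + 2 ^ k - 1 := by omega
      rwa [he]
    · intro i h1 h2; exfalso; omega
    · intro i h1 h2; exfalso; omega
    · intro i h1 h2; exfalso; omega
  · have hrem : 1 ≤ e + 1 - (s + 2 ^ k) := by omega
    have hs'le : s + 2 ^ k ≤ e := by omega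
    have hs'pos : s + 2 ^ k ≠ 0 := by omega
    by_cases hA : k = v ∧ 2 ^ (k + 1) ≤ e + 1 - (s + 2 ^ k)
    · obtain ⟨hkv, hbig⟩ := hA
      have hdvd1 : 2 ^ (k + 1) ∣ s + 2 ^ k := by
        rw [hkv]; exact dvd_succ_pow (by omega)
      obtain ⟨a', b', L', R', hL0, hRb, hmem, hcons, hdbl, hhalf, hhead⟩ :=
        IH (e - (s + 2 ^ k)) (by omega) (s + 2 ^ k) e rfl (by omega) hs'le
      have hv' : k + 1 ≤ padicValNat 2 (s + 2 ^ k) := le_padic hs'pos hdvd1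
      have hl' : k + 1 ≤ Nat.log 2 (e + 1 - (s + 2 ^ k)) :=
        (Nat.le_log_iff_pow_le (by norm_num) (by omega)).mpr hbig
      have hheadge : 2 * 2 ^ k ≤ R' (-(a' : ℤ)) + 1 - L' (-(a' : ℤ)) := by
        rw [hhead]
        calc 2 * 2 ^ k = 2 ^ (k + 1) := by ring
        _ ≤ _ := Nat.pow_le_pow_right (by norm_num) (le_min hv' hl')
      refine ⟨a' + 1, b', fun i => if i < -(a' : ℤ) then s else L' i,
        fun i => if i < -(a' : ℤ) then s + 2 ^ k - 1 else R' i, ?_, ?_, ?_, ?_, ?_, ?_, ?_⟩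
      · simp only []
        rw [if_pos (by push_cast; omega)]
      · simp only []
        rw [if_neg (by push_cast; omega), hRb]
      · intro i h1 h2
        push_cast at h1 h2
        simp only []
        by_cases hi : i < -(a' : ℤ)
        · rw [if_pos hi, if_pos hi]
          exact ⟨by omega, gc_chunk hs hdvdk, le_refl _, by omega⟩
        · rw [if_neg hi, if_neg hi]
          obtain ⟨m1, m2, m3, m4⟩ := hmem i (by omega) (by omega)
          exact ⟨m1, m2, by omega, m4⟩
      · intro i h1 h2
        push_cast at h1 h2
        simp only []
        by_cases hi : i < -(a' : ℤ)
        · rw [if_neg (show ¬ i + 1 < -(a' : ℤ) by omega), if_pos hi]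
          have harg : i + 1 = -(a' : ℤ) := by omega
          rw [harg, hL0]
          omega
        · rw [if_neg (show ¬ i + 1 < -(a' : ℤ) by omega), if_neg hi]
          exact hcons i (by omega) h2
      · intro i h1 h2
        push_cast at h1 h2
        simp only []
        by_cases hi : i - 1 < -(a' : ℤ)
        · have hieq : i = -(a' : ℤ) := by omega
          subst hieq
          rw [if_pos hi, if_pos hi,
            if_neg (show ¬ -(a' : ℤ) < -(a' : ℤ) by omega),
            if_neg (show ¬ -(a' : ℤ) < -(a' : ℤ) by omega)]
          obtain ⟨m1, _, _, _⟩ := hmem (-(a' : ℤ)) (by omega) (by omega)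
          omega
        · simp only [if_neg hi, if_neg (show ¬ i < -(a' : ℤ) by omega)]
          exact hdbl i (by omega) h2
      · intro i h1 h2
        push_cast at h2
        simp only []
        simp only [if_neg (show ¬ i + 1 < -(a' : ℤ) by omega),
          if_neg (show ¬ i < -(a' : ℤ) by omega)]
        exact hhalf i h1 h2
      · simp only []
        rw [if_pos (by push_cast; omega), if_pos (by push_cast; omega)]
        show s + 2 ^ k - 1 + 1 - s = 2 ^ k
        omega
    · have hrem_lt : e + 1 - (s + 2 ^ k) < 2 ^ (k + 1) := by
        rcases Nat.lt_or_ge (e + 1 - (s + 2 ^ k)) (2 ^ (k + 1)) with h | h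
        · exact h
        · exfalso
          have hkv : ¬ (k = v) := fun hkv' => hA ⟨hkv', h⟩
          have hkkl : k = kl := by
            rcases hchoice with h1 | h1 <;> omega
          have hlt2 : e + 1 - s < 2 ^ (kl + 1) := Nat.lt_pow_succ_log_self (by norm_num) _
          rw [← hkkl] at hlt2
          omega
      obtain ⟨bD, LD, RD, hL0, hRb, hmem, hcons, hhalf, _⟩ :=
        lemD (e - (s + 2 ^ k)) (s + 2 ^ k) e k rfl (by omega) hs'le
          (dvd_add hdvdk dvd_rfl) hrem_lt
      refine ⟨0, bD + 1, fun i => if i ≤ 0 then s else LD (i - 1),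
        fun i => if i ≤ 0 then s + 2 ^ k - 1 else RD (i - 1), ?_, ?_, ?_, ?_, ?_, ?_, ?_⟩
      · simp only []
        rw [if_pos (by omega : -((0:ℕ):ℤ) ≤ 0)]
      · simp only []
        rw [if_neg (by push_cast; omega)]
        have harg : ((bD + 1 : ℕ) : ℤ) - 1 = (bD : ℤ) := by push_cast; ring
        rw [harg, hRb]
      · intro i h1 h2
        push_cast at h1 h2
        simp only []
        by_cases hi : i ≤ 0
        · have : i = 0 := le_antisymm hi h1
          subst this
          rw [if_pos (le_refl (0:ℤ)), if_pos (le_refl (0:ℤ))]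
          exact ⟨by omega, gc_chunk hs hdvdk, le_refl _, by omega⟩
        · rw [if_neg hi, if_neg hi]
          obtain ⟨m1, m2, m3, m4⟩ := hmem (i - 1) (by omega) (by omega)
          exact ⟨m1, m2, by omega, m4⟩
      · intro i h1 h2
        push_cast at h1 h2
        simp only []
        by_cases hi : i ≤ 0
        · have : i = 0 := le_antisymm hi h1
          subst this
          rw [if_neg (by omega : ¬ (0:ℤ) + 1 ≤ 0), if_pos (le_refl (0:ℤ))]
          have harg : (0:ℤ) + 1 - 1 = 0 := by ring
          rw [harg, hL0]
          omega
        · rw [if_neg (by omega : ¬ i + 1 ≤ 0), if_neg hi]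
          have harg : i + 1 - 1 = (i - 1) + 1 := by ring
          rw [harg]
          exact hcons (i - 1) (by omega) (by omega)
      · intro i h1 h2
        exfalso
        push_cast at h1
        omega
      · intro i h1 h2
        push_cast at h2
        simp only []
        simp only [if_neg (show ¬ i + 1 ≤ 0 by omega), if_neg (show ¬ i ≤ 0 by omega)]
        have harg : i + 1 - 1 = (i - 1) + 1 := by ring
        rw [harg]
        exact hhalf (i - 1) (by omega) (by omega)
      · simp only []
        rw [if_pos (by omega : -((0:ℕ):ℤ) ≤ 0), if_pos (by omega : -((0:ℕ):ℤ) ≤ 0)]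
        show s + 2 ^ k - 1 + 1 - s = 2 ^ k
        omega


theorem geometric_covering_partition (I1 I2 : ℕ) (hI1 : 1 ≤ I1) (hI : I1 ≤ I2) :
    ∃ (a b : ℕ) (L R : ℤ → ℕ),
      L (-(a : ℤ)) = I1 ∧ R (b : ℤ) = I2 ∧
      (∀ i : ℤ, -(a : ℤ) ≤ i → i ≤ (b : ℤ) →
        L i ≤ R i ∧ IsGCInterval (L i) (R i) ∧ I1 ≤ L i ∧ R i ≤ I2) ∧
      (∀ i : ℤ, -(a : ℤ) ≤ i → i < (b : ℤ) → L (i + 1) = R i + 1) ∧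
      (∀ i : ℤ, -(a : ℤ) < i → i ≤ 0 →
        2 * (R (i - 1) - L (i - 1) + 1) ≤ R i - L i + 1) ∧
      (∀ i : ℤ, 1 ≤ i → i < (b : ℤ) →
        2 * (R (i + 1) - L (i + 1) + 1) ≤ R i - L i + 1) := by
  obtain ⟨a, b, L, R, h1, h2, h3, h4, h5, h6, _⟩ := lemU (I2 - I1) I1 I2 rfl hI1 hI
  exact ⟨a, b, L, R, h1, h2, h3, h4, h5, h6⟩
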